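/- The sum of Θ_i over all indices i with N/2+1 ≤ i ≤ N is bounded by 2·max{σ/α, 1}; in particular it is bounded by a constant independent of ε and N. -/

import Mathlib

lemma tele_aux (f : ℕ → ℝ) (a b : ℕ) (h : a ≤ b) :
    ∑ i ∈ Finset.Icc (a+1) b, (f i - f (i-1)) = f b - f a := by
  induction b, h using Nat.le_induction with
  | base => simp
  | succ n hn ih =>
      rw [Finset.sum_Icc_succ_top (by omega), ih]
      simp

lemma min_one_le_exp (a : ℝ) (ha : 0 ≤ a) : min a 1 ≤ 2 * (1 - Real.exp (-a)) := by
  rcases le_total a 1 with h | h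
  · rw [min_eq_left h]
    have h1 : Real.exp (-a) ≤ 1 / (1 + a) := by
      rw [Real.exp_neg, div_eq_inv_mul, mul_one]
      exact inv_anti₀ (by linarith) (by linarith [Real.add_one_le_exp a])
    have h2 : 1 / (1 + a) ≤ 1 - a/2 := by
      rw [div_le_iff₀ (by linarith)]
      nlinarith
    linarith
  · rw [min_eq_right h]
    have h1 : Real.exp (-a) ≤ Real.exp (-1) := Real.exp_le_exp.2 (by linarith)
    have h2 : Real.exp (-1) ≤ 1/2 := by
      rw [Real.exp_neg, inv_le_comm₀ (Real.exp_pos 1) (by norm_num)]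
      linarith [Real.add_one_le_exp 1]
    linarith

lemma min_scale (a c : ℝ) (ha : 0 ≤ a) :
    min (c*a) 1 ≤ max c 1 * min a 1 := by
  rcases le_total a 1 with h | h
  · rw [min_eq_left h]
    rcases le_total (c*a) 1 with h2 | h2
    · rw [min_eq_left h2]
      exact mul_le_mul_of_nonneg_right (le_max_left c 1) ha
    · rw [min_eq_right h2]
      calc (1:ℝ) ≤ c * a := h2
        _ ≤ max c 1 * a := mul_le_mul_of_nonneg_right (le_max_left c 1) ha
  · rw [min_eq_right h]
    calc min (c*a) 1 ≤ 1 := min_le_right _ _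
      _ ≤ max c 1 := le_max_right c 1
      _ = max c 1 * 1 := (mul_one _).symm

noncomputable def gfun (φ : ℝ → ℝ) (N : ℕ) (i : ℕ) : ℝ :=
  Real.exp (-(φ (1 - (i:ℝ)/(N:ℝ))))

theorem theta_sum_bound
    (α σ ε : ℝ) (hα : 0 < α) (hσ : 0 < σ) (hε : 0 < ε)
    (N : ℕ) (hN4 : 4 ≤ N) (hNeven : Even N)
    (φ φ' : ℝ → ℝ)
    (hφderiv : ∀ t ∈ Set.Icc (0:ℝ) (1/2), HasDerivAt φ (φ' t) t)
    (hφ'cont : ContinuousOn φ' (Set.Icc (0:ℝ) (1/2)))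
    (hφ0 : φ 0 = 0)
    (hφ'pos : ∀ t ∈ Set.Icc (0:ℝ) (1/2), 0 < φ' t)
    (ψ : ℝ → ℝ) (hψ : ∀ t, ψ t = Real.exp (-φ t)) :
    ∑ i ∈ Finset.Icc (N / 2 + 1) N,
        min ((σ * ε / α) * (φ (1 - ((i:ℝ) - 1) / N) - φ (1 - (i:ℝ) / N)) / ε) 1
          * ψ (1 - (i:ℝ) / N)
      ≤ 2 * max (σ / α) 1 := by
  obtain ⟨k, hk⟩ := hNeven
  have hk2 : N = 2 * k := by omega
  have hNk : N / 2 = k := by omega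
  have hkpos : 2 ≤ k := by omega
  have hNpos : (0:ℝ) < N := by positivity
  set M := max (σ / α) 1 with hM
  have hM1 : (1:ℝ) ≤ M := le_max_right _ _
  have hφcont : ContinuousOn φ (Set.Icc (0:ℝ) (1/2)) :=
    fun x hx => (hφderiv x hx).continuousAt.continuousWithinAt
  have hmono : StrictMonoOn φ (Set.Icc (0:ℝ) (1/2)) := by
    apply strictMonoOn_of_deriv_pos (convex_Icc _ _) hφcont
    intro x hx
    rw [interior_Icc] at hx
    have hx' : x ∈ Set.Icc (0:ℝ) (1/2) := Set.mem_Icc.2 ⟨le_of_lt hx.1, le_of_lt hx.2⟩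
    rw [(hφderiv x hx').deriv]
    exact hφ'pos x hx'
  have key : ∀ i ∈ Finset.Icc (N / 2 + 1) N,
      min ((σ * ε / α) * (φ (1 - ((i:ℝ) - 1) / N) - φ (1 - (i:ℝ) / N)) / ε) 1
          * ψ (1 - (i:ℝ) / N) ≤ 2 * M * (gfun φ N i - gfun φ N (i-1)) := by
    intro i hi
    rw [Finset.mem_Icc, hNk] at hi
    set u : ℝ := 1 - ((i:ℝ) - 1) / N with hu
    set v : ℝ := 1 - (i:ℝ) / N with hv
    have hiR : (k:ℝ) + 1 ≤ (i:ℝ) := by exact_mod_cast hi.1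
    have hiR2 : (i:ℝ) ≤ (N:ℝ) := by exact_mod_cast hi.2
    have hNR : (N:ℝ) = 2 * k := by exact_mod_cast hk2
    have humem : u ∈ Set.Icc (0:ℝ) (1/2) := by
      constructor
      · rw [hu, sub_nonneg, div_le_one hNpos]; linarith
      · have h : (1:ℝ)/2 ≤ ((i:ℝ)-1)/N := by
          rw [le_div_iff₀ hNpos]; nlinarith
        rw [hu]; linarith
    have hvmem : v ∈ Set.Icc (0:ℝ) (1/2) := by
      constructor
      · rw [hv, sub_nonneg, div_le_one hNpos]; exact hiR2
      · have h : (1:ℝ)/2 ≤ (i:ℝ)/N := by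
          rw [le_div_iff₀ hNpos]; nlinarith
        rw [hv]; linarith
    have hvu : v ≤ u := by
      rw [hu, hv, sub_le_sub_iff_left]
      gcongr
      linarith
    set a : ℝ := φ u - φ v with ha
    have hannn : 0 ≤ a := by
      rw [ha, sub_nonneg]
      exact hmono.monotoneOn hvmem humem hvu
    have hsim : (σ * ε / α) * a / ε = (σ/α) * a := by
      field_simp
    have hgi : gfun φ N i = Real.exp (-(φ v)) := by rw [gfun, hv]
    have hgi1 : gfun φ N (i-1) = Real.exp (-(φ u)) := by
      rw [gfun, hu]
      congr 3
      push_cast [Nat.cast_sub (by omega : 1 ≤ i)]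
      ring
    rw [hψ, hsim, hgi, hgi1]
    have hstep1 : min ((σ/α)*a) 1 ≤ M * min a 1 := min_scale a (σ/α) hannn
    have hstep2 : min a 1 ≤ 2 * (1 - Real.exp (-a)) := min_one_le_exp a hannn
    have hexpnn : (0:ℝ) ≤ Real.exp (-(φ v)) := (Real.exp_pos _).le
    have hfinal : Real.exp (-(φ v)) - Real.exp (-(φ u))
        = Real.exp (-(φ v)) * (1 - Real.exp (-a)) := by
      rw [mul_sub, mul_one, ← Real.exp_add, ha]
      ring_nf
    calc min ((σ/α)*a) 1 * Real.exp (-(φ v))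
        ≤ (M * (2 * (1 - Real.exp (-a)))) * Real.exp (-(φ v)) := by
          apply mul_le_mul_of_nonneg_right _ hexpnn
          calc min ((σ/α)*a) 1 ≤ M * min a 1 := hstep1
            _ ≤ M * (2 * (1 - Real.exp (-a))) :=
              mul_le_mul_of_nonneg_left hstep2 (by linarith)
      _ = 2 * M * (Real.exp (-(φ v)) - Real.exp (-(φ u))) := by rw [hfinal]; ring
  calc ∑ i ∈ Finset.Icc (N / 2 + 1) N,
        min ((σ * ε / α) * (φ (1 - ((i:ℝ) - 1) / N) - φ (1 - (i:ℝ) / N)) / ε) 1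
          * ψ (1 - (i:ℝ) / N)
      ≤ ∑ i ∈ Finset.Icc (N / 2 + 1) N, 2 * M * (gfun φ N i - gfun φ N (i-1)) :=
        Finset.sum_le_sum key
    _ = 2 * M * (gfun φ N N - gfun φ N (N/2)) := by
        rw [← Finset.mul_sum, tele_aux (gfun φ N) (N/2) N (by omega)]
    _ ≤ 2 * M := by
        have h1 : gfun φ N N = 1 := by
          rw [gfun, div_self (ne_of_gt hNpos)]
          norm_num [hφ0]
        have h2 : 0 ≤ gfun φ N (N/2) := (Real.exp_pos _).le
        nlinarith
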